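/- Let S = {(y₁, y₂, y₃, y₄) ∈ ℝ⁴ : y₁ ≥ 0, y₂ ≥ 0, y₁y₂ = y₃² + y₄²} and define π : S → ℝ³ by π(y₁,y₂,y₃,y₄) = ((y₁ − y₂)/2, y₃, y₄). Then π is a homeomorphism of S onto ℝ³, with inverse g : ℝ³ → S given by g(p₁,p₂,p₃) = (p₁ + √(p₁² + p₂² + p₃²), −p₁ + √(p₁² + p₂² + p₃²), p₂, p₃). Moreover g is Lipschitz; consequently there is a constant C > 0 such that |π(u) − π(v)| ≥ C|u − v| for all u, v ∈ S. -/

import Mathlib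

open scoped BigOperators

/-- The orbit space `S` of the standard circle action on `ℂ²`, realized as
`{(y₁,y₂,y₃,y₄) ∈ ℝ⁴ : y₁ ≥ 0, y₂ ≥ 0, y₁y₂ = y₃² + y₄²}`. -/
def Sorbit : Set (EuclideanSpace ℝ (Fin 4)) :=
  {y | 0 ≤ y 0 ∧ 0 ≤ y 1 ∧ y 0 * y 1 = (y 2) ^ 2 + (y 3) ^ 2}

/-- The model moment map `π(y₁,y₂,y₃,y₄) = ((y₁−y₂)/2, y₃, y₄)`. -/
noncomputable def momentPi (y : EuclideanSpace ℝ (Fin 4)) : EuclideanSpace ℝ (Fin 3) :=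
  WithLp.toLp 2 ![(y 0 - y 1) / 2, y 2, y 3]

/-- The inverse map `g(p₁,p₂,p₃) = (p₁+√(p₁²+p₂²+p₃²), −p₁+√(p₁²+p₂²+p₃²), p₂, p₃)`. -/
noncomputable def momentInv (p : EuclideanSpace ℝ (Fin 3)) : EuclideanSpace ℝ (Fin 4) :=
  WithLp.toLp 2 ![p 0 + Real.sqrt ((p 0) ^ 2 + (p 1) ^ 2 + (p 2) ^ 2),
    -p 0 + Real.sqrt ((p 0) ^ 2 + (p 1) ^ 2 + (p 2) ^ 2),
    p 1, p 2]

lemma dist4 (x y : EuclideanSpace ℝ (Fin 4)) :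
    dist x y = Real.sqrt ((x 0 - y 0)^2 + (x 1 - y 1)^2 + (x 2 - y 2)^2 + (x 3 - y 3)^2) := by
  rw [EuclideanSpace.dist_eq]
  simp [Fin.sum_univ_four, Real.dist_eq, sq_abs]

lemma dist3 (x y : EuclideanSpace ℝ (Fin 3)) :
    dist x y = Real.sqrt ((x 0 - y 0)^2 + (x 1 - y 1)^2 + (x 2 - y 2)^2) := by
  rw [EuclideanSpace.dist_eq]
  simp [Fin.sum_univ_three, Real.dist_eq, sq_abs]

lemma norm3 (p : EuclideanSpace ℝ (Fin 3)) :
    Real.sqrt ((p 0)^2 + (p 1)^2 + (p 2)^2) = ‖p‖ := by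
  rw [EuclideanSpace.norm_eq]
  simp [Fin.sum_univ_three, sq_abs]

lemma momentInv_apply (p : EuclideanSpace ℝ (Fin 3)) :
    momentInv p 0 = p 0 + ‖p‖ ∧ momentInv p 1 = -p 0 + ‖p‖ ∧
    momentInv p 2 = p 1 ∧ momentInv p 3 = p 2 := by
  refine ⟨?_, ?_, ?_, ?_⟩ <;> simp [momentInv, norm3]

lemma momentInv_mem (p : EuclideanSpace ℝ (Fin 3)) : momentInv p ∈ Sorbit := by
  obtain ⟨h0, h1, h2, h3⟩ := momentInv_apply p
  have hn : (p 0)^2 + (p 1)^2 + (p 2)^2 = ‖p‖^2 := by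
    rw [← norm3, Real.sq_sqrt] ; positivity
  have habs : |p 0| ≤ ‖p‖ := by
    nlinarith [abs_nonneg (p 0), norm_nonneg p, sq_abs (p 0)]
  obtain ⟨hl, hr⟩ := abs_le.1 habs
  refine ⟨?_, ?_, ?_⟩
  · rw [h0] ; linarith
  · rw [h1] ; linarith
  · rw [h0, h1, h2, h3] ; nlinarith

lemma lipInv : LipschitzWith 4 momentInv := by
  apply LipschitzWith.of_dist_le_mul
  intro p q
  obtain ⟨p0, p1, p2, p3⟩ := momentInv_apply p
  obtain ⟨q0, q1, q2, q3⟩ := momentInv_apply q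
  rw [dist4, p0, p1, p2, p3, q0, q1, q2, q3]
  have hd : dist p q = Real.sqrt ((p 0 - q 0)^2 + (p 1 - q 1)^2 + (p 2 - q 2)^2) := dist3 p q
  have hd2 : (dist p q)^2 = (p 0 - q 0)^2 + (p 1 - q 1)^2 + (p 2 - q 2)^2 := by
    rw [hd, Real.sq_sqrt] ; positivity
  have hdn : 0 ≤ dist p q := dist_nonneg
  have hnn : |‖p‖ - ‖q‖| ≤ dist p q := by
    rw [dist_eq_norm] ; exact abs_norm_sub_norm_le p q
  have hnn2 : (‖p‖ - ‖q‖)^2 ≤ (dist p q)^2 := by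
    nlinarith [abs_nonneg (‖p‖ - ‖q‖), sq_abs (‖p‖ - ‖q‖)]
  have key : (p 0 + ‖p‖ - (q 0 + ‖q‖))^2 + (-p 0 + ‖p‖ - (-q 0 + ‖q‖))^2
      + (p 1 - q 1)^2 + (p 2 - q 2)^2 ≤ (4 * dist p q)^2 := by nlinarith
  calc Real.sqrt ((p 0 + ‖p‖ - (q 0 + ‖q‖))^2 + (-p 0 + ‖p‖ - (-q 0 + ‖q‖))^2
      + (p 1 - q 1)^2 + (p 2 - q 2)^2) ≤ Real.sqrt ((4 * dist p q)^2) :=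
        Real.sqrt_le_sqrt key
    _ = 4 * dist p q := Real.sqrt_sq (by linarith)
    _ = (4 : NNReal) * dist p q := by norm_num

lemma lipPi : LipschitzWith 1 momentPi := by
  apply LipschitzWith.of_dist_le_mul
  intro u v
  rw [dist3, dist4]
  have h02 : (momentPi u 0 - momentPi v 0)^2 = ((u 0 - v 0) - (u 1 - v 1))^2 / 4 := by
    simp [momentPi] ; ring
  have h1 : momentPi u 1 - momentPi v 1 = u 2 - v 2 := by simp [momentPi]
  have h2 : momentPi u 2 - momentPi v 2 = u 3 - v 3 := by simp [momentPi]
  rw [h1, h2]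
  push_cast
  rw [one_mul]
  apply Real.sqrt_le_sqrt
  rw [h02]
  nlinarith [sq_nonneg (u 0 - v 0 + (u 1 - v 1))]

lemma pi_inv (p : EuclideanSpace ℝ (Fin 3)) : momentPi (momentInv p) = p := by
  obtain ⟨h0, h1, h2, h3⟩ := momentInv_apply p
  ext i
  fin_cases i <;> simp [momentPi, h0, h1, h2, h3] <;> ring

lemma inv_pi (y : EuclideanSpace ℝ (Fin 4)) (hy : y ∈ Sorbit) :
    momentInv (momentPi y) = y := by
  obtain ⟨hy0, hy1, hy2⟩ := hy
  have hp0 : momentPi y 0 = (y 0 - y 1) / 2 := by simp [momentPi]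
  have hp1 : momentPi y 1 = y 2 := by simp [momentPi]
  have hp2 : momentPi y 2 = y 3 := by simp [momentPi]
  obtain ⟨h0, h1, h2, h3⟩ := momentInv_apply (momentPi y)
  have hnrm : ‖momentPi y‖ = (y 0 + y 1) / 2 := by
    rw [← norm3, hp0, hp1, hp2]
    have : ((y 0 - y 1) / 2)^2 + (y 2)^2 + (y 3)^2 = ((y 0 + y 1) / 2)^2 := by
      nlinarith
    rw [this, Real.sqrt_sq (by linarith)]
  ext i
  fin_cases i
  · show momentInv (momentPi y) 0 = y 0
    rw [h0, hnrm, hp0] ; ring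
  · show momentInv (momentPi y) 1 = y 1
    rw [h1, hnrm, hp0] ; ring
  · show momentInv (momentPi y) 2 = y 2
    rw [h2, hp1]
  · show momentInv (momentPi y) 3 = y 3
    rw [h3, hp2]

noncomputable def momentHomeo : Sorbit ≃ₜ EuclideanSpace ℝ (Fin 3) where
  toFun y := momentPi y
  invFun p := ⟨momentInv p, momentInv_mem p⟩
  left_inv y := Subtype.ext (inv_pi y y.2)
  right_inv p := pi_inv p
  continuous_toFun := (lipPi.continuous).comp continuous_subtype_val
  continuous_invFun := Continuous.subtype_mk lipInv.continuous _

/-- Equation (27) of the paper: `π` is a homeomorphism of `S` onto `ℝ³` with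
inverse `g`; moreover `g` is Lipschitz, so `|π(u) − π(v)| ≥ C|u − v|` on `S`. -/
theorem moment_map_model_homeomorphism :
    (∀ p : EuclideanSpace ℝ (Fin 3), momentInv p ∈ Sorbit) ∧
    (∀ y ∈ Sorbit, momentInv (momentPi y) = y) ∧
    (∀ p : EuclideanSpace ℝ (Fin 3), momentPi (momentInv p) = p) ∧
    (∃ h : Sorbit ≃ₜ EuclideanSpace ℝ (Fin 3),
      (∀ y : Sorbit, h y = momentPi (y : EuclideanSpace ℝ (Fin 4))) ∧
      (∀ p : EuclideanSpace ℝ (Fin 3), ((h.symm p : Sorbit) : EuclideanSpace ℝ (Fin 4))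
        = momentInv p)) ∧
    (∃ L : NNReal, LipschitzWith L momentInv) ∧
    (∃ C : ℝ, 0 < C ∧ ∀ u ∈ Sorbit, ∀ v ∈ Sorbit,
      C * ‖u - v‖ ≤ ‖momentPi u - momentPi v‖) := by
  refine ⟨momentInv_mem, inv_pi, pi_inv, ⟨momentHomeo, fun y => rfl, fun p => rfl⟩,
    ⟨4, lipInv⟩, ⟨1/4, by norm_num, ?_⟩⟩
  intro u hu v hv
  have h := lipInv.dist_le_mul (momentPi u) (momentPi v)
  rw [inv_pi u hu, inv_pi v hv] at h
  rw [dist_eq_norm, dist_eq_norm] at h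
  push_cast at h
  linarith
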